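/- The Steiner diversity is the maximal diversity with induced metric d: if (X, δ) is a finite diversity with induced metric d and δ_S is the Steiner diversity of (X,d), then δ(A) ≤ δ_S(A) for all finite A ⊆ X. -/

import Mathlib

open scoped Classical

/-- The Steiner diversity of a metric d on X. -/
noncomputable def steinerDiv {X : Type*} (d : X → X → ℝ) (A : Finset X) : ℝ :=
  sInf { c : ℝ | ∃ E : Finset (X × X),
    (∀ a ∈ A, ∀ b ∈ A,
      Relation.ReflTransGen (fun u v => (u, v) ∈ E ∨ (v, u) ∈ E) a b) ∧
    c = ∑ e ∈ E, d e.1 e.2 }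

/-- Connectivity via an edge set. -/
private def Conn {X : Type*} (E : Finset (X × X)) (a b : X) : Prop :=
  Relation.ReflTransGen (fun u v => (u, v) ∈ E ∨ (v, u) ∈ E) a b

private lemma Conn.refl {X : Type*} (E : Finset (X × X)) (a : X) : Conn E a a :=
  Relation.ReflTransGen.refl

private lemma Conn.symm {X : Type*} {E : Finset (X × X)} {a b : X}
    (h : Conn E a b) : Conn E b a :=
  by
  unfold Conn at h ⊢
  induction h with
  | refl => exact Relation.ReflTransGen.refl
  | tail _ h2 ih => exact Relation.ReflTransGen.head h2.symm ih

private lemma Conn.trans {X : Type*} {E : Finset (X × X)} {a b c : X}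
    (h : Conn E a b) (h' : Conn E b c) : Conn E a c :=
  Relation.ReflTransGen.trans h h'

private lemma conn_lift {X : Type*} {E F : Finset (X × X)}
    (h : ∀ u v, (u, v) ∈ E → Conn F u v) {a b : X}
    (hab : Conn E a b) : Conn F a b := by
  induction hab with
  | refl => exact Relation.ReflTransGen.refl
  | tail _ h2 ih =>
    rcases h2 with h2 | h2
    · exact ih.trans (h _ _ h2)
    · exact ih.trans (h _ _ h2).symm

private lemma conn_mono {X : Type*} {E F : Finset (X × X)} (hEF : E ⊆ F) {a b : X}
    (hab : Conn E a b) : Conn F a b :=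
  conn_lift (fun _ _ hm => Relation.ReflTransGen.single (Or.inl (hEF hm))) hab

/-- If the source is not `E.erase e`-connected to either endpoint of `e`, then paths
avoid `e` entirely. -/
private lemma conn_avoid {X : Type*} [DecidableEq X] {E : Finset (X × X)} {e : X × X}
    {a b : X} (h : Conn E a b) :
    ¬ Conn (E.erase e) a e.1 → ¬ Conn (E.erase e) a e.2 → Conn (E.erase e) a b := by
  induction h using Relation.ReflTransGen.head_induction_on with
  | refl => intro _ _; exact Relation.ReflTransGen.refl
  | @head x c hstep hrest ih =>
    intro h1 h2
    have hne : (x, c) ≠ e ∧ (c, x) ≠ e := by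
      constructor
      · intro hx
        exact h1 (by rw [show x = e.1 from congrArg Prod.fst hx]; exact Relation.ReflTransGen.refl)
      · intro hx
        exact h2 (by rw [show x = e.2 from congrArg Prod.snd hx]; exact Relation.ReflTransGen.refl)
    have hxc : (x, c) ∈ E.erase e ∨ (c, x) ∈ E.erase e := by
      rcases hstep with h | h
      · exact Or.inl (Finset.mem_erase.2 ⟨hne.1, h⟩)
      · exact Or.inr (Finset.mem_erase.2 ⟨hne.2, h⟩)
    have hstep' : Conn (E.erase e) x c := Relation.ReflTransGen.single hxc
    have hc1 : ¬ Conn (E.erase e) c e.1 := fun hc => h1 (hstep'.trans hc)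
    have hc2 : ¬ Conn (E.erase e) c e.2 := fun hc => h2 (hstep'.trans hc)
    exact hstep'.trans (ih hc1 hc2)

/-- Restrict a connection to the edges satisfying a predicate which holds on all edges both
of whose endpoints connect to the target. -/
private lemma conn_to_filter {X : Type*} (E' : Finset (X × X)) (t : X)
    (p : X × X → Prop) [DecidablePred p]
    (hp : ∀ f ∈ E', Conn E' f.1 t → Conn E' f.2 t → p f)
    {x : X} (h : Conn E' x t) : Conn (E'.filter p) x t := by
  induction h using Relation.ReflTransGen.head_induction_on with
  | refl => exact Relation.ReflTransGen.refl
  | @head x c hstep hrest ih =>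
    have hx : Conn E' x t := Relation.ReflTransGen.head hstep hrest
    have hc : Conn E' c t := hrest
    have hxc : (x, c) ∈ E'.filter p ∨ (c, x) ∈ E'.filter p := by
      rcases hstep with h | h
      · exact Or.inl (Finset.mem_filter.2 ⟨h, hp _ h hx hc⟩)
      · exact Or.inr (Finset.mem_filter.2 ⟨h, hp _ h hc hx⟩)
    exact Relation.ReflTransGen.head hxc ih

private lemma div_mono {X : Type*} [DecidableEq X] (δ : Finset X → ℝ)
    (h_zero : ∀ A : Finset X, δ A = 0 ↔ A.card ≤ 1)
    (h_tri : ∀ A B C : Finset X, C.Nonempty → δ (A ∪ B) ≤ δ (A ∪ C) + δ (C ∪ B)) :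
    ∀ A B : Finset X, A ⊆ B → δ A ≤ δ B := by
  have step : ∀ (A : Finset X) (x : X), δ A ≤ δ (insert x A) := by
    intro A x
    have h := h_tri A ∅ {x} (by simp)
    have hx : δ ({x} : Finset X) = 0 := (h_zero {x}).2 (by simp)
    have hu : A ∪ ({x} : Finset X) = insert x A := by ext y; simp [or_comm]
    simpa [hu, hx] using h
  have key : ∀ (C A : Finset X), δ A ≤ δ (A ∪ C) := by
    intro C
    induction C using Finset.induction_on with
    | empty => intro A; simp
    | insert x C hx ih =>
      intro A
      calc δ A ≤ δ (A ∪ C) := ih A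
        _ ≤ δ (insert x (A ∪ C)) := step _ _
        _ = δ (A ∪ insert x C) := by rw [Finset.union_insert]
  intro A B hAB
  have : A ∪ B = B := Finset.union_eq_right.2 hAB
  calc δ A ≤ δ (A ∪ B) := key B A
    _ = δ B := by rw [this]

private lemma steiner_key {X : Type*} [DecidableEq X] (δ : Finset X → ℝ)
    (h_nonneg : ∀ A : Finset X, 0 ≤ δ A)
    (h_zero : ∀ A : Finset X, δ A = 0 ↔ A.card ≤ 1)
    (h_tri : ∀ A B C : Finset X, C.Nonempty → δ (A ∪ B) ≤ δ (A ∪ C) + δ (C ∪ B)) :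
    ∀ n : ℕ, ∀ E : Finset (X × X), E.card ≤ n → ∀ A : Finset X,
      (∀ a ∈ A, ∀ b ∈ A, Conn E a b) → δ A ≤ ∑ e ∈ E, δ {e.1, e.2} := by
  have mono := div_mono δ h_zero h_tri
  intro n
  induction n with
  | zero =>
    intro E hE A hA
    have hE0 : E = ∅ := Finset.card_eq_zero.1 (Nat.le_zero.1 hE)
    subst hE0
    have hcard : A.card ≤ 1 := by
      rw [Finset.card_le_one]
      intro a ha b hb
      have h := hA a ha b hb
      induction h with
      | refl => rfl
      | tail _ h2 ih => simp at h2
    rw [(h_zero A).2 hcard]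
    simp
  | succ n ih =>
    intro E hE A hA
    by_cases hle : E.card ≤ n
    · exact ih E hle A hA
    have hpos : 0 < E.card := by omega
    obtain ⟨e, he⟩ := Finset.card_pos.1 hpos
    set E' := E.erase e with hE'def
    have hE'card : E'.card ≤ n := by
      rw [hE'def, Finset.card_erase_of_mem he]
      omega
    have hsum : ∑ f ∈ E, δ {f.1, f.2} = δ {e.1, e.2} + ∑ f ∈ E', δ {f.1, f.2} :=
      (Finset.add_sum_erase E _ he).symm
    by_cases hsep : Conn E' e.1 e.2
    -- Case 1: e is redundant.
    · have hA' : ∀ a ∈ A, ∀ b ∈ A, Conn E' a b := by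
        intro a ha b hb
        refine conn_lift (fun u v huv => ?_) (hA a ha b hb)
        by_cases huve : (u, v) = e
        · rw [show u = e.1 from congrArg Prod.fst huve,
            show v = e.2 from congrArg Prod.snd huve]
          exact hsep
        · exact Relation.ReflTransGen.single (Or.inl (Finset.mem_erase.2 ⟨huve, huv⟩))
      have h1 := ih E' hE'card A hA'
      have h2 : 0 ≤ δ {e.1, e.2} := h_nonneg _
      linarith
    -- Case 2: removing e disconnects.
    · by_cases hex : ∀ a ∈ A, Conn E' a e.1 ∨ Conn E' a e.2
      · -- A splits into two sides
        set B1 := A.filter (fun a => Conn E' a e.1) with hB1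
        set B2 := A.filter (fun a => Conn E' a e.2) with hB2
        set P := insert e.1 B1 with hP
        set Q := insert e.2 B2 with hQ
        set E1 := E'.filter (fun f => Conn E' f.1 e.1) with hE1
        set E2 := E'.filter (fun f => ¬ Conn E' f.1 e.1) with hE2
        have hPconn : ∀ x ∈ P, Conn E1 x e.1 := by
          intro x hx
          rcases Finset.mem_insert.1 hx with rfl | hx
          · exact Relation.ReflTransGen.refl
          · exact conn_to_filter E' e.1 _ (fun f _ h1 _ => h1)
              (Finset.mem_filter.1 hx).2
        have hQconn : ∀ x ∈ Q, Conn E2 x e.2 := by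
          intro x hx
          have hp : ∀ f ∈ E', Conn E' f.1 e.2 → Conn E' f.2 e.2 →
              ¬ Conn E' f.1 e.1 := by
            intro f _ h1 _ hc
            exact hsep (hc.symm.trans h1)
          rcases Finset.mem_insert.1 hx with rfl | hx
          · exact Relation.ReflTransGen.refl
          · exact conn_to_filter E' e.2 _ hp (Finset.mem_filter.1 hx).2
        have hPpair : ∀ a ∈ P, ∀ b ∈ P, Conn E1 a b :=
          fun a ha b hb => (hPconn a ha).trans (hPconn b hb).symm
        have hQpair : ∀ a ∈ Q, ∀ b ∈ Q, Conn E2 a b :=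
          fun a ha b hb => (hQconn a ha).trans (hQconn b hb).symm
        have hE1card : E1.card ≤ n :=
          le_trans (Finset.card_le_card (Finset.filter_subset _ _)) hE'card
        have hE2card : E2.card ≤ n :=
          le_trans (Finset.card_le_card (Finset.filter_subset _ _)) hE'card
        have hIH1 := ih E1 hE1card P hPpair
        have hIH2 := ih E2 hE2card Q hQpair
        have hsum12 : ∑ f ∈ E1, δ {f.1, f.2} + ∑ f ∈ E2, δ {f.1, f.2}
            = ∑ f ∈ E', δ {f.1, f.2} :=
          Finset.sum_filter_add_sum_filter_not E' _ _
        have hAsub : A ⊆ P ∪ Q := by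
          intro a ha
          rcases hex a ha with h | h
          · exact Finset.mem_union.2 (Or.inl (Finset.mem_insert.2
              (Or.inr (Finset.mem_filter.2 ⟨ha, h⟩))))
          · exact Finset.mem_union.2 (Or.inr (Finset.mem_insert.2
              (Or.inr (Finset.mem_filter.2 ⟨ha, h⟩))))
        have hstep1 : δ A ≤ δ (P ∪ Q) := mono _ _ hAsub
        have hstep2 : δ (P ∪ Q) ≤ δ (P ∪ {e.1}) + δ ({e.1} ∪ Q) :=
          h_tri P Q {e.1} (by simp)
        have hPe : P ∪ {e.1} = P := by
          apply Finset.union_eq_left.2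
          intro x hx
          rw [Finset.mem_singleton.1 hx]
          exact Finset.mem_insert_self _ _
        have hstep3 : δ ({e.1} ∪ Q) ≤ δ ({e.1} ∪ {e.2}) + δ ({e.2} ∪ Q) :=
          h_tri {e.1} Q {e.2} (by simp)
        have hQe : ({e.2} : Finset X) ∪ Q = Q := by
          apply Finset.union_eq_right.2
          intro x hx
          rw [Finset.mem_singleton.1 hx]
          exact Finset.mem_insert_self _ _
        have h12 : ({e.1} : Finset X) ∪ {e.2} = {e.1, e.2} := by
          ext x; simp
        rw [hPe] at hstep2
        rw [hQe, h12] at hstep3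
        have := calc δ A ≤ δ (P ∪ Q) := hstep1
          _ ≤ δ P + δ ({e.1} ∪ Q) := hstep2
          _ ≤ δ P + (δ {e.1, e.2} + δ Q) := by linarith
        linarith [this, hIH1, hIH2, hsum12, hsum]
      · -- some point of A is E'-disconnected from both endpoints of e
        push_neg at hex
        obtain ⟨a, ha, h1, h2⟩ := hex
        have hA' : ∀ x ∈ A, ∀ y ∈ A, Conn E' x y := by
          have hax : ∀ x ∈ A, Conn E' a x := fun x hx =>
            conn_avoid (hA a ha x hx) h1 h2
          intro x hx y hy
          exact (hax x hx).symm.trans (hax y hy)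
        have hIH := ih E' hE'card A hA'
        have h2' : 0 ≤ δ {e.1, e.2} := h_nonneg _
        linarith

/-- The Steiner diversity is the maximal diversity with induced
metric d: if (X, δ) is a finite diversity with induced metric d(x,y) = δ({x,y})
and δ_S is the Steiner diversity of (X,d), then δ(A) ≤ δ_S(A) for all finite A. -/
theorem steiner_maximal {X : Type*} [Fintype X] [DecidableEq X] (δ : Finset X → ℝ)
    (h_nonneg : ∀ A : Finset X, 0 ≤ δ A)
    (h_zero : ∀ A : Finset X, δ A = 0 ↔ A.card ≤ 1)
    (h_tri : ∀ A B C : Finset X, C.Nonempty → δ (A ∪ B) ≤ δ (A ∪ C) + δ (C ∪ B)) :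
    ∀ A : Finset X, δ A ≤ steinerDiv (fun x y => δ {x, y}) A := by
  intro A
  apply le_csInf
  · refine ⟨∑ e ∈ (Finset.univ : Finset (X × X)), δ {e.1, e.2}, Finset.univ, ?_, rfl⟩
    intro a _ b _
    exact Relation.ReflTransGen.single (Or.inl (Finset.mem_univ _))
  · rintro c ⟨E, hconn, rfl⟩
    exact steiner_key δ h_nonneg h_zero h_tri E.card E le_rfl A hconn
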